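/- Let $W(e_1,e_2,e_3)$ be a wedge generated by linearly independent unit vectors in $\mathbb{R}^3$. The wedge is simple, i.e., the orthogonal projection of $e_1$ onto the span of $\{e_2,e_3\}$ is a positive multiple of $e_2$ and the orthogonal projection of $e_2$ onto the span of $\{e_3\}$ is a positive multiple of $e_3$, if and only if $\langle e_1,e_2\rangle>0$, $\langle e_2,e_3\rangle>0$, and $\langle e_1,e_3\rangle = \langle e_1,e_2\rangle\langle e_2,e_3\rangle$. -/

import Mathlib

open scoped RealInnerProductSpace

/-- A three-dimensional wedge generated by linearly independent unit vectors is *simple*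
(the orthogonal projection of `e1` onto `span {e2, e3}` is a positive multiple of `e2`,
and the orthogonal projection of `e2` onto `span {e3}` is a positive multiple of `e3`)
if and only if `⟪e1,e2⟫ > 0`, `⟪e2,e3⟫ > 0` and `⟪e1,e3⟫ = ⟪e1,e2⟫ * ⟪e2,e3⟫`. -/
theorem simple_wedge_characterization
    (e1 e2 e3 : EuclideanSpace ℝ (Fin 3))
    (hindep : LinearIndependent ℝ ![e1, e2, e3])
    (h1 : ‖e1‖ = 1) (h2 : ‖e2‖ = 1) (h3 : ‖e3‖ = 1) :
    (((Submodule.orthogonalProjectionOnto (Submodule.span ℝ {e2, e3}) e1 : EuclideanSpace ℝ (Fin 3)) ∈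
        {v | ∃ c : ℝ, 0 < c ∧ v = c • e2}) ∧
      ((Submodule.orthogonalProjectionOnto (Submodule.span ℝ {e3}) e2 : EuclideanSpace ℝ (Fin 3)) ∈
        {v | ∃ c : ℝ, 0 < c ∧ v = c • e3})) ↔
    (0 < ⟪e1, e2⟫ ∧ 0 < ⟪e2, e3⟫ ∧ ⟪e1, e3⟫ = ⟪e1, e2⟫ * ⟪e2, e3⟫) := by
  have he3 : e3 ≠ 0 := by intro h; rw [h, norm_zero] at h3; norm_num at h3
  have i22 : ⟪e2, e2⟫ = 1 := by rw [real_inner_self_eq_norm_sq, h2]; norm_num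
  have i33 : ⟪e3, e3⟫ = 1 := by rw [real_inner_self_eq_norm_sq, h3]; norm_num
  have hproj2 : (Submodule.orthogonalProjectionOnto (Submodule.span ℝ {e3}) e2 :
      EuclideanSpace ℝ (Fin 3)) = ⟪e3, e2⟫ • e3 := by
    rw [Submodule.coe_orthogonalProjectionOnto_apply, Submodule.starProjection_singleton, h3]
    norm_num
  have he2mem : e2 ∈ Submodule.span ℝ ({e2, e3} : Set (EuclideanSpace ℝ (Fin 3))) :=
    Submodule.subset_span (Set.mem_insert _ _)
  have he3mem : e3 ∈ Submodule.span ℝ ({e2, e3} : Set (EuclideanSpace ℝ (Fin 3))) :=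
    Submodule.subset_span (Set.mem_insert_of_mem _ rfl)
  constructor
  · rintro ⟨⟨c, hc, hce⟩, ⟨d, hd, hde⟩⟩
    -- second projection
    have hd' : d = ⟪e3, e2⟫ := by
      have : (d - ⟪e3, e2⟫) • e3 = 0 := by
        rw [sub_smul, hproj2] at *
        rw [← hde, sub_self]
      rcases smul_eq_zero.mp this with h | h
      · linarith [sub_eq_zero.mp (by exact h)]
      · exact absurd h he3
    have hb : 0 < ⟪e2, e3⟫ := by rw [real_inner_comm]; rw [hd'] at hd; exact hd
    -- first projection
    have horth := Submodule.sub_starProjection_mem_orthogonal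
      (K := Submodule.span ℝ ({e2, e3} : Set (EuclideanSpace ℝ (Fin 3)))) e1
    rw [Submodule.starProjection_apply, hce] at horth
    have o2 : ⟪e2, e1 - c • e2⟫ = 0 := horth e2 he2mem
    have o3 : ⟪e3, e1 - c • e2⟫ = 0 := horth e3 he3mem
    have c21 : ⟪e2, e1⟫ = ⟪e1, e2⟫ := real_inner_comm _ _
    have c31 : ⟪e3, e1⟫ = ⟪e1, e3⟫ := real_inner_comm _ _
    have c32 : ⟪e3, e2⟫ = ⟪e2, e3⟫ := real_inner_comm _ _
    rw [inner_sub_right, inner_smul_right, i22] at o2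
    rw [inner_sub_right, inner_smul_right] at o3
    have hc' : ⟪e1, e2⟫ = c := by rw [← c21]; linarith
    refine ⟨by rw [hc']; exact hc, hb, by rw [hc', ← c31, ← c32]; linarith⟩
  · rintro ⟨ha, hb, heq⟩
    constructor
    · refine ⟨⟪e1, e2⟫, ha, ?_⟩
      rw [Submodule.coe_orthogonalProjectionOnto_apply]
      apply Submodule.eq_starProjection_of_mem_of_inner_eq_zero
        (Submodule.smul_mem _ _ he2mem)
      intro w hw
      induction hw using Submodule.span_induction with
      | mem x hx =>
        rcases hx with h | h
        · rw [h, inner_sub_left, inner_smul_left, i22]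
          simp
        · simp only [Set.mem_singleton_iff] at h
          rw [h, inner_sub_left, inner_smul_left]
          simp [heq]
      | zero => simp
      | add x y _ _ hx hy => rw [inner_add_right, hx, hy]; ring
      | smul a x _ hx => rw [inner_smul_right, hx]; ring
    · exact ⟨⟪e2, e3⟫, hb, by rw [hproj2, real_inner_comm]⟩
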